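/- Let p > 2 and μ > 1 be real numbers with μ < (1/2)·(p/(p−1))^{p−1}, and define H₁(t) = t²/(p−1) − ((p−2)/p)·(p−1)^{−p/(p−2)}·t^{2(p−1)/(p−2)} for t > 0. If β̃ ≥ (p−1)μ and (2(p−1)/p)·μ ≥ H₁(β̃), then there is no real number τ ∈ (1, +∞) satisfying simultaneously p·τ^{2p−2} − 2β̃·τ^p = μ(2−p) and μ + β̃·τ^p − β̃·τ^{p−2} − τ^{2p−2} = 0. -/

import Mathlib

/-- `m(s) = (p-2)s^p - p s^{p-1} + p s - (p-2) > 0` for `s > 1`, `p > 2`. -/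
lemma key_m (p s : ℝ) (hp : 2 < p) (hs : 1 < s) :
    0 < (p-2)*s^p - p*s^(p-1) + p*s - (p-2) := by
  set f : ℝ → ℝ := fun x => (p-2)*x^p - p*x^(p-1) + p*x - (p-2) with hf
  set f' : ℝ → ℝ := fun x => (p-2)*p*x^(p-1) - p*(p-1)*x^(p-2) + p with hf'
  have hd1 : ∀ x : ℝ, 0 < x → HasDerivAt f (f' x) x := by
    intro x hx
    have h1 : HasDerivAt (fun y : ℝ => y^p) (p*x^(p-1)) x :=
      Real.hasDerivAt_rpow_const (Or.inl hx.ne')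
    have h2 : HasDerivAt (fun y : ℝ => y^(p-1)) ((p-1)*x^(p-1-1)) x :=
      Real.hasDerivAt_rpow_const (Or.inl hx.ne')
    have h3 : HasDerivAt (fun y : ℝ => p*y) p x := by
      simpa using (hasDerivAt_id x).const_mul p
    have := (((h1.const_mul (p-2)).sub (h2.const_mul p)).add h3).sub_const (p-2)
    convert this using 1
    case e'_4 => rfl
    case e'_5 => rfl
    case e'_8 => rfl
    have e1 : p - 1 - 1 = p - 2 := by ring
    rw [e1]; ring
  have hd2 : ∀ x : ℝ, 0 < x →
      HasDerivAt f' ((p-2)*p*(p-1)*(x^(p-2) - x^(p-3))) x := by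
    intro x hx
    have h1 : HasDerivAt (fun y : ℝ => y^(p-1)) ((p-1)*x^(p-1-1)) x :=
      Real.hasDerivAt_rpow_const (Or.inl hx.ne')
    have h2 : HasDerivAt (fun y : ℝ => y^(p-2)) ((p-2)*x^(p-2-1)) x :=
      Real.hasDerivAt_rpow_const (Or.inl hx.ne')
    have := ((h1.const_mul ((p-2)*p)).sub (h2.const_mul (p*(p-1)))).add_const p
    convert this using 1
    case e'_4 => rfl
    case e'_5 => rfl
    case e'_8 => rfl
    have e1 : p - 1 - 1 = p - 2 := by ring
    have e2 : p - 2 - 1 = p - 3 := by ring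
    rw [e1, e2]; ring
  have hxpos : ∀ x : ℝ, x ∈ Set.Ici (1:ℝ) → (0:ℝ) < x := fun x hx => lt_of_lt_of_le one_pos hx
  -- f' strictly monotone on [1, ∞)
  have mono' : StrictMonoOn f' (Set.Ici 1) := by
    apply strictMonoOn_of_deriv_pos (convex_Ici 1)
    · exact fun x hx => ((hd2 x (hxpos x hx)).continuousAt).continuousWithinAt
    · intro x hx
      rw [interior_Ici] at hx
      have hx1 : (1:ℝ) < x := hx
      have hx0 : (0:ℝ) < x := by linarith
      rw [(hd2 x hx0).deriv]
      have : x^(p-3) < x^(p-2) := Real.rpow_lt_rpow_of_exponent_lt hx1 (by linarith)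
      have hc : 0 < (p-2)*p*(p-1) := mul_pos (mul_pos (by linarith) (by linarith)) (by linarith)
      nlinarith
  have hf'1 : f' 1 = 0 := by simp [hf', Real.one_rpow]; ring
  have hf'pos : ∀ x : ℝ, 1 < x → 0 < f' x := by
    intro x hx
    have := mono' (Set.self_mem_Ici) (Set.mem_Ici.mpr hx.le) hx
    rwa [hf'1] at this
  have mono : StrictMonoOn f (Set.Ici 1) := by
    apply strictMonoOn_of_deriv_pos (convex_Ici 1)
    · exact fun x hx => ((hd1 x (hxpos x hx)).continuousAt).continuousWithinAt
    · intro x hx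
      rw [interior_Ici] at hx
      rw [(hd1 x (by linarith [Set.mem_Ioi.mp hx] : (0:ℝ) < x)).deriv]
      exact hf'pos x hx
  have hf1 : f 1 = 0 := by simp [hf, Real.one_rpow]; ring
  have := mono (Set.self_mem_Ici) (Set.mem_Ici.mpr hs.le) hs
  rw [hf1] at this
  simpa [hf] using this

/-- Key inequality in terms of `τ`. -/
lemma key_tau (p τ : ℝ) (hp : 2 < p) (hτ : 1 < τ) :
    τ^(p-2) * τ^p * (p * τ^(p-2) - (p-2) * τ^p) < p * τ^p - (p-2) * τ^(p-2) := by
  have hτ0 : (0:ℝ) < τ := by linarith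
  set a := τ^(p-2) with ha
  set b := τ^p with hb
  set s := τ^(2:ℝ) with hs
  have hs1 : 1 < s := by
    rw [hs]
    exact Real.one_lt_rpow_iff_of_pos hτ0 |>.mpr (Or.inl ⟨hτ, by norm_num⟩)
  have hab : b = a * s := by
    rw [hb, ha, hs, ← Real.rpow_add hτ0]
    congr 1; ring
  have h2p : s^p = b * b := by
    rw [hs, hb, ← Real.rpow_mul hτ0.le, show (2:ℝ)*p = p+p by ring, Real.rpow_add hτ0]
  have h2p1 : s^(p-1) = a * b := by
    rw [hs, ha, hb, ← Real.rpow_mul hτ0.le, show (2:ℝ)*(p-1) = (p-2)+p by ring,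
      Real.rpow_add hτ0]
  have hm := key_m p s hp hs1
  rw [h2p, h2p1] at hm
  have ha0 : (0:ℝ) < a := Real.rpow_pos_of_pos hτ0 _
  have hfin : 0 < a * ((p-2)*(b*b) - p*(a*b) + p*s - (p-2)) := mul_pos ha0 hm
  have keyid : p*b - (p-2)*a - a*b*(p*a - (p-2)*b)
      = a*((p-2)*(b*b) - p*(a*b) + p*s - (p-2)) := by rw [hab]; ring
  linarith

/-- Case (B3): for `p > 2`, `1 < μ < (1/2)(p/(p-1))^{p-1}`, `β̃ ≥ (p-1)μ` and
`(2(p-1)/p)μ ≥ H₁(β̃)` where `H₁(t) = t²/(p-1) - ((p-2)/p)(p-1)^{-p/(p-2)} t^{2(p-1)/(p-2)}`,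
the system `p·τ^{2p-2} - 2β̃·τ^p = μ(2-p)`, `μ + β̃·τ^p - β̃·τ^{p-2} - τ^{2p-2} = 0`
has no solution `τ ∈ (1, +∞)`. -/
theorem no_solution_B3 (p μ β : ℝ) (hp : 2 < p) (hμ : 1 < μ)
    (hμ' : μ < (1 / 2) * (p / (p - 1)) ^ (p - 1)) (hβ : (p - 1) * μ ≤ β)
    (H₁ : ℝ → ℝ)
    (hH₁ : ∀ t > 0, H₁ t = t ^ 2 / (p - 1) -
      ((p - 2) / p) * (p - 1) ^ (-(p / (p - 2))) * t ^ (2 * (p - 1) / (p - 2)))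
    (hcond : (2 * (p - 1) / p) * μ ≥ H₁ β) :
    ¬ ∃ τ : ℝ, 1 < τ ∧
      p * τ ^ (2 * p - 2) - 2 * β * τ ^ p = μ * (2 - p) ∧
      μ + β * τ ^ p - β * τ ^ (p - 2) - τ ^ (2 * p - 2) = 0 := by
  rintro ⟨τ, hτ, h1, h2⟩
  have hτ0 : (0:ℝ) < τ := by linarith
  set u := τ^(p-2) with hu
  set v := τ^p with hv
  have huv : τ^(2*p-2) = u * v := by
    rw [hu, hv, ← Real.rpow_add hτ0]
    congr 1; ring
  rw [huv] at h1 h2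
  have hβ0 : (0:ℝ) < β := by nlinarith
  have hu1 : 1 < u := Real.one_lt_rpow_iff_of_pos hτ0 |>.mpr
    (Or.inl ⟨hτ, by linarith⟩)
  have huv' : u < v := Real.rpow_lt_rpow_of_exponent_lt hτ (by linarith)
  -- two consequences of the system
  have hA : p*β*u - (p-2)*β*v = 2*(p-1)*μ := by linear_combination -h1 - p * h2
  have hB : 2*β*u - (p-2)*(u*v) = p*μ := by linear_combination -h1 - 2*h2
  -- linear consequence
  have hC : β*(p*v - (p-2)*u) = 2*(p-1)*(u*v) := by
    have h6 : (p-2) * (β*(p*v - (p-2)*u)) = (p-2) * (2*(p-1)*(u*v)) := by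
      linear_combination (2*(p-1))*hB - p*hA
    exact mul_left_cancel₀ (by intro h; exact absurd h (by intro h'; linarith) : (p-2) ≠ 0) h6
  -- key inequality
  have hkey : u * v * (p*u - (p-2)*v) < p*v - (p-2)*u := key_tau p τ hp hτ
  have hL : 0 < p*v - (p-2)*u := by nlinarith
  have h5 : u*v*(p*u - (p-2)*v) < μ*(p*v - (p-2)*u) :=
    lt_of_lt_of_le hkey (le_mul_of_one_le_left hL.le hμ.le)
  have h7 : β*(u*v*(p*u - (p-2)*v)) < β*(μ*(p*v - (p-2)*u)) :=
    mul_lt_mul_of_pos_left h5 hβ0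
  have e1 : β*(u*v*(p*u - (p-2)*v)) = u*v*(2*(p-1)*μ) := by
    linear_combination (u*v)*hA
  have e2 : β*(μ*(p*v - (p-2)*u)) = μ*(2*(p-1)*(u*v)) := by
    linear_combination μ*hC
  rw [e1, e2] at h7
  have : u*v*(2*(p-1)*μ) = μ*(2*(p-1)*(u*v)) := by ring
  linarith
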